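/- Let γ > 0, β > 0 and ε < 0 with γβ < ε², and let (E₁*, E₂*, ψ*) be the damped and driven two-site breather: s = √(ε² − γβ), E₁* = ½√(γ/β)·s, E₂* = ½√(β/γ)·s, ψ* = −arcsin(√(γβ)/ε). Then the Jacobian matrix at (E₁*, E₂*, ψ*) of the map (E₁, E₂, ψ) ↦ (2ε√(E₁E₂) sin ψ + 2βE₁, −2ε√(E₁E₂) sin ψ − 2γE₂, 2(E₂ − E₁)(1 + ε cos ψ/(2√(E₁E₂)))) equals the 3×3 matrix with rows (β, −γ, −(ε² − γβ)), (β, −γ, ε² − γβ), (−1 + β/γ, 1 − γ/β, β − γ). -/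

import Mathlib

/-- The right-hand side of the two-site energy-phase system, as a map
`(E₁, E₂, ψ) ↦ (Ė₁, Ė₂, ψ̇)`. -/
noncomputable def twoSiteField (ε γ β : ℝ) (x : ℝ × ℝ × ℝ) : ℝ × ℝ × ℝ :=
  (2 * ε * Real.sqrt (x.1 * x.2.1) * Real.sin x.2.2 + 2 * β * x.1,
   -(2 * ε * Real.sqrt (x.1 * x.2.1) * Real.sin x.2.2) - 2 * γ * x.2.1,
   2 * (x.2.1 - x.1) * (1 + ε * Real.cos x.2.2 / (2 * Real.sqrt (x.1 * x.2.1))))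

open ContinuousLinearMap in
set_option maxHeartbeats 1000000 in
/-- The Jacobian of the two-site energy-phase system at the damped and driven
two-site breather is the matrix with rows `(β, −γ, −(ε² − γβ))`,
`(β, −γ, ε² − γβ)`, `(−1 + β/γ, 1 − γ/β, β − γ)`. -/
theorem stmt_13 (ε γ β : ℝ) (hγ : 0 < γ) (hβ : 0 < β) (hε : ε < 0)
    (h : γ * β < ε ^ 2) :
    ∀ v : ℝ × ℝ × ℝ,
      fderiv ℝ (twoSiteField ε γ β)
        ((1 / 2) * Real.sqrt (γ / β) * Real.sqrt (ε ^ 2 - γ * β),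
         (1 / 2) * Real.sqrt (β / γ) * Real.sqrt (ε ^ 2 - γ * β),
         -Real.arcsin (Real.sqrt (γ * β) / ε)) v =
      (β * v.1 - γ * v.2.1 - (ε ^ 2 - γ * β) * v.2.2,
       β * v.1 - γ * v.2.1 + (ε ^ 2 - γ * β) * v.2.2,
       (-1 + β / γ) * v.1 + (1 - γ / β) * v.2.1 + (β - γ) * v.2.2) := by
  intro v
  set s := Real.sqrt (ε ^ 2 - γ * β) with hs_def
  have hspos : 0 < s := Real.sqrt_pos.mpr (by nlinarith)
  have hs2 : s ^ 2 = ε ^ 2 - γ * β := Real.sq_sqrt (by nlinarith)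
  set a := Real.sqrt γ with ha_def
  set b := Real.sqrt β with hb_def
  have hapos : 0 < a := Real.sqrt_pos.mpr hγ
  have hbpos : 0 < b := Real.sqrt_pos.mpr hβ
  have ha2 : a ^ 2 = γ := Real.sq_sqrt hγ.le
  have hb2 : b ^ 2 = β := Real.sq_sqrt hβ.le
  have hab : Real.sqrt (γ * β) = a * b := Real.sqrt_mul hγ.le β
  have hgb : Real.sqrt (γ / β) = a / b := Real.sqrt_div hγ.le β
  have hbg : Real.sqrt (β / γ) = b / a := Real.sqrt_div hβ.le γ
  set p : ℝ × ℝ × ℝ :=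
    ((1 / 2) * Real.sqrt (γ / β) * s, (1 / 2) * Real.sqrt (β / γ) * s,
      -Real.arcsin (Real.sqrt (γ * β) / ε)) with hp
  have hp1 : p.1 = 1 / 2 * (a / b) * s := by rw [hp, hgb]
  have hp21 : p.2.1 = 1 / 2 * (b / a) * s := by rw [hp, hbg]
  have h1 : 0 < p.1 := by rw [hp1]; positivity
  have h2 : 0 < p.2.1 := by rw [hp21]; positivity
  have hprod : p.1 * p.2.1 = (s / 2) ^ 2 := by
    rw [hp1, hp21]; field_simp
  have hSval : Real.sqrt (p.1 * p.2.1) = s / 2 := by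
    rw [hprod, Real.sqrt_sq (by positivity)]
  -- sin and cos at the point
  have habε : a * b < -ε := by nlinarith [sq_nonneg (a*b + ε), Real.sq_sqrt hγ.le, Real.sq_sqrt hβ.le]
  have ht1 : (-1 : ℝ) ≤ a * b / ε := by
    rw [le_div_iff_of_neg hε]; nlinarith
  have ht2 : a * b / ε ≤ 1 := by
    have : a * b / ε ≤ 0 := div_nonpos_of_nonneg_of_nonpos (by positivity) hε.le
    linarith
  have hsinval : Real.sin p.2.2 = -(a * b / ε) := by
    rw [hp, hab]; simp [Real.sin_arcsin ht1 ht2]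
  have hcosval : Real.cos p.2.2 = s / (-ε) := by
    rw [hp, hab]
    rw [Real.cos_neg, Real.cos_arcsin]
    have hne : ε ≠ 0 := hε.ne
    have key : 1 - (a * b / ε) ^ 2 = (s / (-ε)) ^ 2 := by
      rw [div_pow, div_pow, neg_pow_two, mul_pow, ha2, hb2, hs2]
      field_simp
    rw [key, Real.sqrt_sq (div_nonneg hspos.le (by linarith))]
  -- build the derivative
  have hE1 : HasFDerivAt (fun x : ℝ × ℝ × ℝ => x.1) (fst ℝ ℝ (ℝ × ℝ)) p := hasFDerivAt_fst
  have hE2 : HasFDerivAt (fun x : ℝ × ℝ × ℝ => x.2.1)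
      ((fst ℝ ℝ ℝ).comp (snd ℝ ℝ (ℝ × ℝ))) p := hasFDerivAt_fst.comp p hasFDerivAt_snd
  have hE3 : HasFDerivAt (fun x : ℝ × ℝ × ℝ => x.2.2)
      ((snd ℝ ℝ ℝ).comp (snd ℝ ℝ (ℝ × ℝ))) p := hasFDerivAt_snd.comp p hasFDerivAt_snd
  have hmulpos : 0 < p.1 * p.2.1 := mul_pos h1 h2
  have hmul := hE1.mul hE2
  have hS := hmul.sqrt (ne_of_gt hmulpos)
  have hsin := (Real.hasDerivAt_sin p.2.2).comp_hasFDerivAt p hE3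
  have hcos := (Real.hasDerivAt_cos p.2.2).comp_hasFDerivAt p hE3
  have hf1 := ((hS.const_mul (2*ε)).mul hsin).add (hE1.const_mul (2*β))
  have hf2 := (((hS.const_mul (2*ε)).mul hsin).neg).sub (hE2.const_mul (2*γ))
  have hDne : (2 : ℝ) * Real.sqrt (p.1 * p.2.1) ≠ 0 := by positivity
  have hD := hS.const_mul (2:ℝ)
  have hinv := (hasDerivAt_inv hDne).comp_hasFDerivAt p hD
  have hN := hcos.const_mul ε
  have hquot := hN.mul hinv
  have hf3 := ((hE2.sub hE1).const_mul (2:ℝ)).mul ((hasFDerivAt_const (1:ℝ) p).add hquot)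
  have hfull : HasFDerivAt (twoSiteField ε γ β) _ p := hf1.prodMk (hf2.prodMk hf3)
  rw [hfull.fderiv]
  simp only [prod_apply, add_apply, smul_apply, coe_comp', coe_fst', coe_snd', neg_apply,
    sub_apply, coe_smul', Pi.smul_apply, Function.comp_apply, smul_eq_mul, zero_apply,
    Pi.mul_apply, Pi.sub_apply, Pi.add_apply, hSval, hsinval, hcosval]
  simp only [hp1, hp21]
  have hε2 : ε ^ 2 = s ^ 2 + a ^ 2 * b ^ 2 := by
    linear_combination (-1) * hs2 + (-b ^ 2) * ha2 + (-γ) * hb2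
  rw [← ha2, ← hb2, hε2]
  have hane : a ≠ 0 := hapos.ne'
  have hbne : b ≠ 0 := hbpos.ne'
  have hsne : s ≠ 0 := hspos.ne'
  have hεne : ε ≠ 0 := hε.ne
  simp only [Prod.mk.injEq]
  refine ⟨?_, ?_, ?_⟩ <;> (field_simp; ring)
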